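/- Let f, g : ℝⁿ → ℝ be differentiable at every point outside sets E_f, E_g respectively, where E_f and E_g are countable unions of (n-1)-tangential sets. Then max(f,g) is differentiable outside a countable union of (n-1)-tangential sets. -/

import Mathlib

open Filter Topology RealInnerProductSpace

/-- `E ⊆ ℝⁿ` is `k`-tangential: at each `x ∈ E` there is a `k`-dimensional subspace `V`
such that for sequences `x + h j ∈ E` with `h j → 0`, the component of `h j`
orthogonal to `V` is `o(|component in V|)`. -/
def IsTangentialSet (n k : ℕ) (E : Set (EuclideanSpace ℝ (Fin n))) : Prop :=
  ∀ x ∈ E, ∃ V : Submodule ℝ (EuclideanSpace ℝ (Fin n)),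
    Module.finrank ℝ V = k ∧
    ∀ h : ℕ → EuclideanSpace ℝ (Fin n),
      (∀ j, x + h j ∈ E) → Tendsto h atTop (𝓝 0) →
      ∀ ε : ℝ, 0 < ε → ∀ᶠ j in atTop,
        ‖(Submodule.orthogonalProjectionOnto Vᗮ (h j) : EuclideanSpace ℝ (Fin n))‖ ≤
          ε * ‖(Submodule.orthogonalProjectionOnto V (h j) : EuclideanSpace ℝ (Fin n))‖

/-- If `f` and `g` both have derivative `L` at `x` and agree at `x`, then `max (f, g)`
has derivative `L` at `x`. -/
lemma hasFDerivAt_max_aux {E : Type*} [NormedAddCommGroup E] [NormedSpace ℝ E]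
    {f g : E → ℝ} {L : E →L[ℝ] ℝ} {x : E}
    (hf : HasFDerivAt f L x) (hg : HasFDerivAt g L x) (hfg : f x = g x) :
    HasFDerivAt (fun z => max (f z) (g z)) L x := by
  rw [hasFDerivAt_iff_isLittleO_nhds_zero] at hf hg ⊢
  have hO : (fun t => max (f (x + t)) (g (x + t)) - max (f x) (g x) - L t) =O[𝓝 0]
      (fun t => ‖f (x + t) - f x - L t‖ + ‖g (x + t) - g x - L t‖) := by
    apply Asymptotics.isBigO_of_le
    intro t
    have h2 : max (f x) (g x) + L t = max (f x + L t) (g x + L t) :=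
      (max_add_add_right _ _ _).symm
    have key : |max (f (x + t)) (g (x + t)) - max (f x) (g x) - L t| ≤
        |f (x + t) - f x - L t| + |g (x + t) - g x - L t| := by
      calc |max (f (x + t)) (g (x + t)) - max (f x) (g x) - L t|
          = |max (f (x + t)) (g (x + t)) - max (f x + L t) (g x + L t)| := by
            rw [← h2]; ring_nf
        _ ≤ max |f (x + t) - (f x + L t)| |g (x + t) - (g x + L t)| :=
            abs_max_sub_max_le_max _ _ _ _
        _ ≤ |f (x + t) - (f x + L t)| + |g (x + t) - (g x + L t)| :=
            max_le (le_add_of_nonneg_right (abs_nonneg _))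
              (le_add_of_nonneg_left (abs_nonneg _))
        _ = |f (x + t) - f x - L t| + |g (x + t) - g x - L t| := by ring_nf
    calc ‖max (f (x + t)) (g (x + t)) - max (f x) (g x) - L t‖
        ≤ |f (x + t) - f x - L t| + |g (x + t) - g x - L t| := key
      _ ≤ ‖‖f (x + t) - f x - L t‖ + ‖g (x + t) - g x - L t‖‖ := by
          rw [Real.norm_eq_abs, Real.norm_eq_abs, Real.norm_eq_abs]
          exact le_abs_self _
  exact hO.trans_isLittleO (hf.norm_left.add hg.norm_left)

set_option maxHeartbeats 1000000 in
/-- If `f` and `g` are differentiable outside countable unions of `(n-1)`-tangential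
sets, then so is `max (f, g)`. -/
theorem max_differentiable_outside_sigma_tangential
    (n : ℕ) (f g : EuclideanSpace ℝ (Fin n) → ℝ)
    (Ef Eg : ℕ → Set (EuclideanSpace ℝ (Fin n)))
    (hEf : ∀ i, IsTangentialSet n (n - 1) (Ef i))
    (hEg : ∀ i, IsTangentialSet n (n - 1) (Eg i))
    (hf : ∀ x, x ∉ ⋃ i, Ef i → DifferentiableAt ℝ f x)
    (hg : ∀ x, x ∉ ⋃ i, Eg i → DifferentiableAt ℝ g x) :
    ∃ P : ℕ → Set (EuclideanSpace ℝ (Fin n)),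
      (∀ i, IsTangentialSet n (n - 1) (P i)) ∧
      ∀ x, x ∉ ⋃ i, P i → DifferentiableAt ℝ (fun z => max (f z) (g z)) x := by
  classical
  set S : Set (EuclideanSpace ℝ (Fin n)) :=
    {x | DifferentiableAt ℝ f x ∧ DifferentiableAt ℝ g x ∧ f x = g x ∧
      fderiv ℝ f x ≠ fderiv ℝ g x} with hSdef
  -- The exceptional set for max: S together with all Ef i and Eg i.
  set P : ℕ → Set (EuclideanSpace ℝ (Fin n)) := fun i =>
    match i with
    | 0 => S
    | (k+1) => if Even k then Ef (k / 2) else Eg (k / 2) with hPdef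
  have hStang : IsTangentialSet n (n - 1) S := by
    intro x hxS
    obtain ⟨hfx, hgx, hfgx, hLne⟩ := hxS
    set L : EuclideanSpace ℝ (Fin n) →L[ℝ] ℝ := fderiv ℝ g x - fderiv ℝ f x with hLdef
    have hL0 : L ≠ 0 := sub_ne_zero.mpr (Ne.symm hLne)
    set v : EuclideanSpace ℝ (Fin n) :=
      (InnerProductSpace.toDual ℝ (EuclideanSpace ℝ (Fin n))).symm L with hvdef
    have hv0 : v ≠ 0 := by
      intro h0
      apply hL0
      rw [← (InnerProductSpace.toDual ℝ (EuclideanSpace ℝ (Fin n))).apply_symm_apply L,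
        ← hvdef, h0, map_zero]
    have hvnorm : 0 < ‖v‖ := norm_pos_iff.mpr hv0
    have hinner : ∀ w, ⟪v, w⟫ = L w := fun w => InnerProductSpace.toDual_symm_apply
    refine ⟨(ℝ ∙ v)ᗮ, ?_, ?_⟩
    · have h1 : Module.finrank ℝ (ℝ ∙ v : Submodule ℝ _) = 1 := finrank_span_singleton hv0
      have h2 := Submodule.finrank_add_finrank_orthogonal (K := (ℝ ∙ v : Submodule ℝ _))
      rw [finrank_euclideanSpace_fin, h1] at h2
      omega
    · intro h hmem htend ε hε
      -- the little-o estimate from differentiability of g - f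
      have hφ : HasFDerivAt (fun z => g z - f z) L x := hgx.hasFDerivAt.sub hfx.hasFDerivAt
      have hlo := hasFDerivAt_iff_isLittleO_nhds_zero.mp hφ
      have hcomp := hlo.comp_tendsto htend
      have heq : ∀ j, ((fun t => (g (x + t) - f (x + t)) - (g x - f x) - L t) ∘ h) j
          = -(L (h j)) := by
        intro j
        have h1 : f (x + h j) = g (x + h j) := (hmem j).2.2.1
        simp only [Function.comp_apply, h1, hfgx]
        ring
      have hLlo : (fun j => L (h j)) =o[atTop] fun j => h j := by
        have h1 : (fun j => -(L (h j))) =o[atTop] (fun j => h j) := by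
          refine hcomp.congr' (Eventually.of_forall heq) (Eventually.of_forall fun j => rfl)
        simpa using h1.neg_left
      have hc : 0 < ε * ‖v‖ / (1 + ε) := by positivity
      filter_upwards [hLlo.def hc] with j hj
      -- identify the projections
      rw [show ((Submodule.orthogonalProjectionOnto (ℝ ∙ v)ᗮᗮ (h j) : EuclideanSpace ℝ (Fin n))) =
          (Submodule.orthogonalProjectionOnto (ℝ ∙ v) (h j) : EuclideanSpace ℝ (Fin n)) from by
        have key : ∀ (K' : Submodule ℝ (EuclideanSpace ℝ (Fin n))) [K'.HasOrthogonalProjection],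
            K' = ℝ ∙ v → (Submodule.orthogonalProjectionOnto K' (h j) : EuclideanSpace ℝ (Fin n)) =
              (Submodule.orthogonalProjectionOnto (ℝ ∙ v) (h j) : EuclideanSpace ℝ (Fin n)) := by
          rintro K' _ rfl; rfl
        exact key _ (Submodule.orthogonal_orthogonal (ℝ ∙ v))]
      have hqval : (Submodule.orthogonalProjectionOnto (ℝ ∙ v) (h j) : EuclideanSpace ℝ (Fin n)) =
          ((⟪v, h j⟫ / ((‖v‖ : ℝ) ^ 2)) • v) := Submodule.starProjection_singleton ℝ (h j)
      have hqnorm : ‖(Submodule.orthogonalProjectionOnto (ℝ ∙ v) (h j) : EuclideanSpace ℝ (Fin n))‖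
          = |L (h j)| / ‖v‖ := by
        rw [hqval, norm_smul, Real.norm_eq_abs, abs_div, hinner]
        rw [abs_of_nonneg (by positivity : (0:ℝ) ≤ ‖v‖ ^ 2)]
        field_simp
      set p : EuclideanSpace ℝ (Fin n) :=
        (Submodule.orthogonalProjectionOnto (ℝ ∙ v)ᗮ (h j) : EuclideanSpace ℝ (Fin n)) with hp
      set q : EuclideanSpace ℝ (Fin n) :=
        (Submodule.orthogonalProjectionOnto (ℝ ∙ v) (h j) : EuclideanSpace ℝ (Fin n)) with hq
      have hsum : q + p = h j := by
        rw [hq, hp]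
        exact (ℝ ∙ v).starProjection_add_starProjection_orthogonal (h j)
      have hhle : ‖h j‖ ≤ ‖p‖ + ‖q‖ := by
        rw [← hsum]
        calc ‖q + p‖ ≤ ‖q‖ + ‖p‖ := norm_add_le _ _
          _ = ‖p‖ + ‖q‖ := add_comm _ _
      have hLj : |L (h j)| ≤ ε * ‖v‖ / (1 + ε) * ‖h j‖ := by
        simpa [Real.norm_eq_abs] using hj
      clear_value p q
      have hqv : ‖q‖ * ‖v‖ = |L (h j)| := by
        rw [hqnorm, div_mul_cancel₀ _ (ne_of_gt hvnorm)]
      have h4 : ‖q‖ * ‖v‖ ≤ ε * ‖v‖ / (1 + ε) * (‖p‖ + ‖q‖) := by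
        rw [hqv]
        exact hLj.trans (mul_le_mul_of_nonneg_left hhle (by positivity))
      have h1ε : (0:ℝ) < 1 + ε := by linarith
      have h6 : ‖q‖ * (1 + ε) * ‖v‖ ≤ ε * (‖p‖ + ‖q‖) * ‖v‖ := by
        have h7 := mul_le_mul_of_nonneg_right h4 h1ε.le
        calc ‖q‖ * (1 + ε) * ‖v‖ = ‖q‖ * ‖v‖ * (1 + ε) := by ring
          _ ≤ ε * ‖v‖ / (1 + ε) * (‖p‖ + ‖q‖) * (1 + ε) := h7
          _ = ε * (‖p‖ + ‖q‖) * ‖v‖ := by field_simp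
      have h5 : ‖q‖ * (1 + ε) ≤ ε * (‖p‖ + ‖q‖) := (mul_le_mul_iff_of_pos_right hvnorm).mp h6
      linarith
  refine ⟨P, ?_, ?_⟩
  · intro i
    match i with
    | 0 => exact hStang
    | (k+1) =>
      show IsTangentialSet n (n-1) (if Even k then Ef (k / 2) else Eg (k / 2))
      split
      · exact hEf _
      · exact hEg _
  · intro x hx
    have hxS : x ∉ S := fun h => hx (Set.mem_iUnion.mpr ⟨0, h⟩)
    have hxf : x ∉ ⋃ i, Ef i := by
      intro hmem
      rcases Set.mem_iUnion.mp hmem with ⟨i, hi⟩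
      refine hx (Set.mem_iUnion.mpr ⟨2 * i + 1, ?_⟩)
      show x ∈ (if Even (2 * i) then Ef ((2 * i) / 2) else Eg ((2 * i) / 2))
      rw [if_pos (even_two_mul i)]
      have : 2 * i / 2 = i := by omega
      rwa [this]
    have hxg : x ∉ ⋃ i, Eg i := by
      intro hmem
      rcases Set.mem_iUnion.mp hmem with ⟨i, hi⟩
      refine hx (Set.mem_iUnion.mpr ⟨2 * i + 2, ?_⟩)
      show x ∈ (if Even (2 * i + 1) then Ef ((2 * i + 1) / 2) else Eg ((2 * i + 1) / 2))
      rw [if_neg (by simp [Nat.even_iff])]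
      have : (2 * i + 1) / 2 = i := by omega
      rwa [this]
    have hfx := hf x hxf
    have hgx := hg x hxg
    by_cases hfg : f x = g x
    · have hd : fderiv ℝ f x = fderiv ℝ g x := by
        by_contra hne
        exact hxS ⟨hfx, hgx, hfg, hne⟩
      have hgd : HasFDerivAt g (fderiv ℝ f x) x := by
        rw [hd]; exact hgx.hasFDerivAt
      exact (hasFDerivAt_max_aux hfx.hasFDerivAt hgd hfg).differentiableAt
    · rcases lt_or_gt_of_ne hfg with hlt | hlt
      · have hev : (fun z => max (f z) (g z)) =ᶠ[𝓝 x] g := by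
          filter_upwards [hfx.continuousAt.eventually_lt hgx.continuousAt hlt] with z hz
          exact max_eq_right hz.le
        exact hgx.congr_of_eventuallyEq hev
      · have hev : (fun z => max (f z) (g z)) =ᶠ[𝓝 x] f := by
          filter_upwards [hgx.continuousAt.eventually_lt hfx.continuousAt hlt] with z hz
          exact max_eq_left hz.le
        exact hfx.congr_of_eventuallyEq hev
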